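/- arXiv:1111.4986 — 5 statements merged into one kernel-verified Lean document; each statement's English description precedes it below -/
import Mathlib

section
/- Let n ≥ 2 and c ∈ (0,1) rational, and set Δ_c = {(x_1,…,x_n) ∈ ℝ^n : x_i ≥ 0 for all i, x_1+…+x_n ≤ c}. If f : Δ_c → ℝ is convex with f(x) ≥ 0 for all x ∈ Δ_c, then for every sufficiently large integer k with kc ∈ ℤ one has ∑_{α ∈ Δ_c ∩ (1/k)ℤ^n} f(α) ≥ k^n ∫_{Δ_{c−(n−1)/k}} f dμ, where μ is Lebesgue measure. -/
open MeasureTheory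

/-- The simplex `Δ_c = {x ∈ ℝⁿ : xᵢ ≥ 0, ∑ xᵢ ≤ c}`. -/
def simplexSet (n : ℕ) (c : ℝ) : Set (Fin n → ℝ) :=
  {x | (∀ i, 0 ≤ x i) ∧ ∑ i, x i ≤ c}

/-- The points `m ∈ ℕⁿ` with `∑ mᵢ ≤ K`; the lattice points of `Δ_c ∩ (1/k)ℤⁿ`
are exactly the points `m/k` for `m` in this finset, when `kc = K`. -/
def simplexLattice (n K : ℕ) : Finset (Fin n → ℕ) :=
  (Fintype.piFinset fun _ => Finset.range (K + 1)).filter fun m => ∑ i, m i ≤ K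

namespace Stmt2Aux



variable {n : ℕ}

/-- the multilinear interpolation weight -/
def wgt (t : Fin n → ℝ) (S : Finset (Fin n)) : ℝ :=
  (∏ i ∈ S, t i) * ∏ i ∈ Sᶜ, (1 - t i)

lemma wgt_nonneg {t : Fin n → ℝ} (h0 : ∀ i, 0 ≤ t i) (h1 : ∀ i, t i ≤ 1)
    (S : Finset (Fin n)) : 0 ≤ wgt t S := by
  apply mul_nonneg
  · exact Finset.prod_nonneg fun i _ => h0 i
  · exact Finset.prod_nonneg fun i _ => by linarith [h1 i]

lemma sum_wgt (t : Fin n → ℝ) : ∑ S : Finset (Fin n), wgt t S = 1 := by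
  have h := Finset.prod_add t (fun i => 1 - t i) (Finset.univ : Finset (Fin n))
  rw [Finset.powerset_univ] at h
  rw [Finset.prod_congr rfl (fun i _ => by ring : ∀ i ∈ Finset.univ, t i + (1 - t i) = (1:ℝ)),
    Finset.prod_const_one] at h
  calc ∑ S : Finset (Fin n), wgt t S
      = ∑ S : Finset (Fin n), (∏ i ∈ S, t i) * ∏ i ∈ Finset.univ \ S, (1 - t i) :=
        Finset.sum_congr rfl fun S _ => by rw [wgt, Finset.compl_eq_univ_sdiff]
    _ = 1 := h.symm

lemma sum_wgt_ite (t : Fin n → ℝ) (j : Fin n) :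
    ∑ S : Finset (Fin n), wgt t S * (if j ∈ S then (1:ℝ) else 0) = t j := by
  classical
  set s : Fin n → ℝ := fun i => if i = j then 0 else 1 - t i with hs
  have h := Finset.prod_add t s (Finset.univ : Finset (Fin n))
  rw [Finset.powerset_univ] at h
  have hL : ∏ i, (t i + s i) = t j := by
    have h2 : ∀ i ∈ Finset.univ, t i + s i = if i = j then t j else 1 := by
      intro i _; simp only [hs]; split_ifs with hij <;> subst_eqs <;> ring
    rw [Finset.prod_congr rfl h2, Finset.prod_ite_eq' Finset.univ j (fun _ => t j)]
    simp
  rw [hL] at h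
  calc ∑ S : Finset (Fin n), wgt t S * (if j ∈ S then (1:ℝ) else 0)
      = ∑ S : Finset (Fin n), (∏ i ∈ S, t i) * ∏ i ∈ Finset.univ \ S, s i := ?_
    _ = t j := h.symm
  refine Finset.sum_congr rfl fun S _ => ?_
  by_cases hj : j ∈ S
  · simp only [hj, if_true, mul_one, wgt, Finset.compl_eq_univ_sdiff]
    congr 1
    refine Finset.prod_congr rfl fun i hi => ?_
    simp only [hs]
    rw [if_neg]
    rintro rfl
    exact (Finset.mem_sdiff.mp hi).2 hj
  · simp only [hj, if_false, mul_zero]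
    rw [Finset.prod_eq_zero (Finset.mem_sdiff.mpr ⟨Finset.mem_univ j, hj⟩)]
    · ring
    · simp [hs]

/-- vertex of the cube -/
noncomputable def vert (k : ℝ) (m : Fin n → ℕ) (S : Finset (Fin n)) : Fin n → ℝ :=
  fun i => ((m i : ℝ) + if i ∈ S then 1 else 0) / k

lemma combo {k : ℝ} (hk : k ≠ 0) (m : Fin n → ℕ) (x : Fin n → ℝ) :
    ∑ S : Finset (Fin n), wgt (fun i => k * x i - m i) S • vert k m S = x := by
  funext j
  simp only [Finset.sum_apply, Pi.smul_apply, smul_eq_mul, vert]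
  set t : Fin n → ℝ := fun i => k * x i - m i with ht
  have h1 := sum_wgt t
  have h2 := sum_wgt_ite t j
  have h3 : ∀ S ∈ (Finset.univ : Finset (Finset (Fin n))),
      wgt t S * (((m j : ℝ) + if j ∈ S then 1 else 0) / k)
        = (wgt t S * (m j : ℝ) + wgt t S * (if j ∈ S then (1:ℝ) else 0)) / k := by
    intro S _; ring
  rw [Finset.sum_congr rfl h3, ← Finset.sum_div, Finset.sum_add_distrib,
    ← Finset.sum_mul, h1, h2]
  field_simp [ht]
  simp only [ht]; ring




lemma integral_lin {k : ℝ} (hk : 0 < k) (a : ℝ) :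
    ∫ y in Set.Ico (a/k) ((a+1)/k), (k * y - a) = 1/(2*k) := by
  have hle : a/k ≤ (a+1)/k := by
    gcongr
    linarith
  rw [MeasureTheory.setIntegral_congr_set MeasureTheory.Ico_ae_eq_Ioc,
    ← intervalIntegral.integral_of_le hle]
  have h1 : IntervalIntegrable (fun y : ℝ => k * y) volume (a/k) ((a+1)/k) :=
    (continuous_const.mul continuous_id).intervalIntegrable _ _
  have h2 : IntervalIntegrable (fun _ : ℝ => a) volume (a/k) ((a+1)/k) :=
    intervalIntegrable_const
  rw [intervalIntegral.integral_sub h1 h2, intervalIntegral.integral_const,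
    intervalIntegral.integral_const_mul, integral_id]
  have hk' : k ≠ 0 := ne_of_gt hk
  field_simp
  linear_combination (-2*a) * mul_inv_cancel₀ hk'

lemma integral_lin' {k : ℝ} (hk : 0 < k) (a : ℝ) :
    ∫ y in Set.Ico (a/k) ((a+1)/k), (1 - (k * y - a)) = 1/(2*k) := by
  have hle : a/k ≤ (a+1)/k := by gcongr; linarith
  rw [MeasureTheory.setIntegral_congr_set MeasureTheory.Ico_ae_eq_Ioc,
    ← intervalIntegral.integral_of_le hle]
  have h1 : IntervalIntegrable (fun y : ℝ => k * y - a) volume (a/k) ((a+1)/k) :=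
    ((continuous_const.mul continuous_id).sub continuous_const).intervalIntegrable _ _
  rw [intervalIntegral.integral_sub intervalIntegrable_const h1,
    intervalIntegral.integral_const]
  have h2 : IntervalIntegrable (fun y : ℝ => k * y) volume (a/k) ((a+1)/k) :=
    (continuous_const.mul continuous_id).intervalIntegrable _ _
  rw [intervalIntegral.integral_sub h2 intervalIntegrable_const,
    intervalIntegral.integral_const, intervalIntegral.integral_const_mul,
    integral_id]
  have hk' : k ≠ 0 := ne_of_gt hk
  field_simp
  linear_combination (2*a+2) * mul_inv_cancel₀ hk'


variable {n : ℕ}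


/-- the half-open cube with lower corner `m/k` -/
def cube (k : ℝ) (m : Fin n → ℕ) : Set (Fin n → ℝ) :=
  {x | ∀ i, x i ∈ Set.Ico ((m i : ℝ)/k) (((m i : ℝ)+1)/k)}

noncomputable def Gfun (k : ℝ) (m : Fin n → ℕ) (S : Finset (Fin n)) :
    (Fin n → ℝ) → ℝ :=
  fun x => ∏ i, (Set.Ico ((m i : ℝ)/k) (((m i : ℝ)+1)/k)).indicator
      (fun y => if i ∈ S then k*y - (m i : ℝ) else 1 - (k*y - (m i : ℝ))) (x i)

lemma mem_Ico_bounds {k a y : ℝ} (hk : 0 < k) (hy : y ∈ Set.Ico (a/k) ((a+1)/k)) :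
    a ≤ k * y ∧ k * y < a + 1 := by
  rcases hy with ⟨hy1, hy2⟩
  rw [div_le_iff₀ hk] at hy1
  rw [lt_div_iff₀ hk] at hy2
  constructor <;> nlinarith

lemma Gfun_nonneg {k : ℝ} (hk : 0 < k) (m : Fin n → ℕ) (S : Finset (Fin n))
    (x : Fin n → ℝ) : 0 ≤ Gfun k m S x := by
  refine Finset.prod_nonneg fun i _ => ?_
  apply Set.indicator_nonneg
  intro y hy
  obtain ⟨h1, h2⟩ := mem_Ico_bounds hk hy
  split_ifs <;> linarith

lemma Gfun_eq_of_mem {k : ℝ} (m : Fin n → ℕ) (S : Finset (Fin n))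
    {x : Fin n → ℝ} (hx : x ∈ cube k m) :
    Gfun k m S x = wgt (fun i => k * x i - (m i : ℝ)) S := by
  unfold Gfun wgt
  rw [Finset.prod_congr rfl
    (fun i _ => Set.indicator_of_mem (hx i)
      (fun y => if i ∈ S then k*y - (m i : ℝ) else 1 - (k*y - (m i : ℝ))))]
  rw [← Finset.prod_mul_prod_compl S
    (fun i => if i ∈ S then k * x i - (m i : ℝ) else 1 - (k * x i - (m i : ℝ)))]
  congr 1
  · exact Finset.prod_congr rfl fun i hi => by rw [if_pos hi]
  · exact Finset.prod_congr rfl fun i hi => by rw [if_neg (Finset.mem_compl.mp hi)]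

lemma Gfun_eq_zero {k : ℝ} (m : Fin n → ℕ) (S : Finset (Fin n))
    {x : Fin n → ℝ} (hx : x ∉ cube k m) : Gfun k m S x = 0 := by
  rw [cube, Set.mem_setOf_eq, not_forall] at hx
  obtain ⟨i, hi⟩ := hx
  exact Finset.prod_eq_zero (Finset.mem_univ i) (Set.indicator_of_notMem hi _)

lemma Gfun_integrable {k : ℝ} (m : Fin n → ℕ) (S : Finset (Fin n)) :
    Integrable (Gfun k m S) := by
  apply Integrable.fintype_prod (f := fun i =>
    (Set.Ico ((m i : ℝ)/k) (((m i : ℝ)+1)/k)).indicator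
      (fun y => if i ∈ S then k*y - (m i : ℝ) else 1 - (k*y - (m i : ℝ))))
  intro i
  apply IntegrableOn.integrable_indicator _ measurableSet_Ico
  apply (Continuous.integrableOn_Icc ?_).mono_set Set.Ico_subset_Icc_self
  split_ifs <;> fun_prop

lemma Gfun_integral {k : ℝ} (hk : 0 < k) (m : Fin n → ℕ) (S : Finset (Fin n)) :
    ∫ x, Gfun k m S x = (1/(2*k))^n := by
  unfold Gfun
  rw [MeasureTheory.volume_pi, MeasureTheory.integral_fintype_prod_eq_prod (𝕜 := ℝ)
    (f := fun i => (Set.Ico ((m i : ℝ)/k) (((m i : ℝ)+1)/k)).indicator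
      (fun y => if i ∈ S then k*y - (m i : ℝ) else 1 - (k*y - (m i : ℝ))))]
  have : ∀ i ∈ Finset.univ, (∫ y : ℝ, (Set.Ico ((m i : ℝ)/k) (((m i : ℝ)+1)/k)).indicator
      (fun y => if i ∈ S then k*y - (m i : ℝ) else 1 - (k*y - (m i : ℝ))) y) = 1/(2*k) := by
    intro i _
    rw [MeasureTheory.integral_indicator measurableSet_Ico]
    by_cases hi : i ∈ S
    · simp only [hi, if_true]
      exact integral_lin hk (m i)
    · simp only [hi, if_false]
      exact integral_lin' hk (m i)
  rw [Finset.prod_congr rfl this, Finset.prod_const, Finset.card_univ, Fintype.card_fin]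



lemma simplex_measurable (n : ℕ) (c' : ℝ) : MeasurableSet (simplexSet n c') := by
  have h : simplexSet n c' = (⋂ i, {x : Fin n → ℝ | 0 ≤ x i}) ∩ {x | ∑ i, x i ≤ c'} := by
    ext x; simp [simplexSet, Set.mem_iInter]
  rw [h]
  exact (MeasurableSet.iInter fun i =>
      measurableSet_le measurable_const (measurable_pi_apply i)).inter
    (measurableSet_le (Finset.measurable_sum _ fun i _ => measurable_pi_apply i)
      measurable_const)

end Stmt2Aux

/-- If `f` is convex and nonnegative on `Δ_c`, then for all sufficiently large `k`
with `kc ∈ ℤ`, `∑_{α ∈ Δ_c ∩ (1/k)ℤⁿ} f(α) ≥ kⁿ ∫_{Δ_{c−(n−1)/k}} f dμ`. -/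
theorem stmt_2 (n : ℕ) (hn : 2 ≤ n) (c : ℚ) (hc0 : 0 < c) (hc1 : c < 1)
    (f : (Fin n → ℝ) → ℝ)
    (hconv : ConvexOn ℝ (simplexSet n (c : ℝ)) f)
    (hpos : ∀ x ∈ simplexSet n (c : ℝ), 0 ≤ f x) :
    ∃ k₀ : ℕ, ∀ k : ℕ, k₀ ≤ k → ∀ K : ℕ, (k : ℝ) * (c : ℝ) = (K : ℝ) →
      (k : ℝ) ^ n * (∫ x in simplexSet n ((c : ℝ) - ((n : ℝ) - 1) / (k : ℝ)), f x)
        ≤ ∑ m ∈ simplexLattice n K, f fun i => (m i : ℝ) / (k : ℝ) := by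
  classical
  open Stmt2Aux in
  refine ⟨(⌈(n : ℚ)/c⌉).toNat + 1, fun k hk K hKk => ?_⟩
  have hk1 : 1 ≤ k := le_trans (Nat.le_add_left 1 _) hk
  have hkpos : (0:ℝ) < (k:ℝ) := by exact_mod_cast hk1
  have hk0 : (k:ℝ) ≠ 0 := ne_of_gt hkpos
  have hcr : (0:ℝ) < (c:ℝ) := by exact_mod_cast hc0
  -- `n ≤ K`
  have hceil : ((n:ℚ)/c) ≤ ((⌈(n : ℚ)/c⌉).toNat : ℚ) := by
    have h0 : (0:ℤ) ≤ ⌈(n : ℚ)/c⌉ := Int.ceil_nonneg (by positivity)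
    calc (n:ℚ)/c ≤ (⌈(n:ℚ)/c⌉ : ℚ) := Int.le_ceil _
      _ = ((⌈(n:ℚ)/c⌉.toNat : ℤ) : ℚ) := by rw [Int.toNat_of_nonneg h0]
      _ = _ := by push_cast; ring
  have hq : (n:ℚ) ≤ (k:ℚ) * c := by
    rw [← div_le_iff₀ hc0]
    calc (n:ℚ)/c ≤ ((⌈(n : ℚ)/c⌉).toNat : ℚ) := hceil
      _ ≤ (k:ℚ) := by exact_mod_cast le_trans (Nat.le_succ _) hk
  have hnKr : (n:ℝ) ≤ (K:ℝ) := by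
    rw [← hKk]; exact_mod_cast hq
  have hnK : n ≤ K := by exact_mod_cast hnKr
  -- the finset of lower corners
  set T : Finset (Fin n → ℕ) :=
    (Fintype.piFinset fun _ : Fin n => Finset.range (K+1)).filter
      (fun m => ∑ i, m i + n ≤ K) with hT
  have hTmem : ∀ m ∈ T, (∀ i, m i < K + 1) ∧ ∑ i, m i + n ≤ K := by
    intro m hm
    rw [hT, Finset.mem_filter, Fintype.mem_piFinset] at hm
    exact ⟨fun i => Finset.mem_range.mp (hm.1 i), hm.2⟩
  have hc_eq : (K:ℝ)/(k:ℝ) = (c:ℝ) := by rw [← hKk]; field_simp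
  -- lattice points lie in the simplex
  have hlatmem : ∀ α ∈ simplexLattice n K,
      (fun i => (α i : ℝ)/(k:ℝ)) ∈ simplexSet n (c:ℝ) := by
    intro α hα
    rw [simplexLattice, Finset.mem_filter] at hα
    refine ⟨fun i => by positivity, ?_⟩
    rw [← Finset.sum_div, ← hc_eq]
    gcongr
    exact_mod_cast hα.2
  -- vertices of cubes are lattice points
  have hvert_mem : ∀ m ∈ T, ∀ S : Finset (Fin n), vert (k:ℝ) m S ∈ simplexSet n (c:ℝ) := by
    intro m hm S
    refine ⟨fun i => by simp only [vert]; positivity, ?_⟩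
    have hsum : ∑ i, vert (k:ℝ) m S i
        = ((∑ i, (m i : ℝ)) + (S.card : ℝ))/(k:ℝ) := by
      simp only [vert]
      rw [← Finset.sum_div, Finset.sum_add_distrib]
      congr 2
      rw [Finset.sum_ite_mem, Finset.univ_inter, Finset.sum_const, nsmul_eq_mul, mul_one]
    rw [hsum, ← hc_eq]
    gcongr
    have hcard : S.card ≤ n := le_trans (Finset.card_le_univ S) (by simp)
    have := (hTmem m hm).2
    push_cast
    have : (∑ i, (m i:ℕ) : ℕ) + S.card ≤ K := by omega
    exact_mod_cast this
  have hfv_nonneg : ∀ m ∈ T, ∀ S : Finset (Fin n), 0 ≤ f (vert (k:ℝ) m S) :=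
    fun m hm S => hpos _ (hvert_mem m hm S)
  -- the dominating step function
  set g : (Fin n → ℝ) → ℝ :=
    fun x => ∑ m ∈ T, ∑ S : Finset (Fin n), f (vert (k:ℝ) m S) * Gfun (k:ℝ) m S x with hg
  have hg_nonneg : ∀ x, 0 ≤ g x := by
    intro x
    refine Finset.sum_nonneg fun m hm => Finset.sum_nonneg fun S _ => ?_
    exact mul_nonneg (hfv_nonneg m hm S) (Gfun_nonneg hkpos m S x)
  have hg_int : Integrable g :=
    integrable_finset_sum _ fun m _ => integrable_finset_sum _
      fun S _ => (Gfun_integrable m S).const_mul _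
  have hg_integral : ∫ x, g x
      = (1/(2*(k:ℝ)))^n * ∑ m ∈ T, ∑ S : Finset (Fin n), f (vert (k:ℝ) m S) := by
    rw [hg, integral_finset_sum _ (fun m _ => integrable_finset_sum _
      fun S _ => (Gfun_integrable m S).const_mul _), Finset.mul_sum]
    refine Finset.sum_congr rfl fun m _ => ?_
    rw [integral_finset_sum _ (fun S _ => (Gfun_integrable m S).const_mul _), Finset.mul_sum]
    refine Finset.sum_congr rfl fun S _ => ?_
    rw [MeasureTheory.integral_const_mul, Gfun_integral hkpos m S]
    ring
  set Δ' : Set (Fin n → ℝ) := simplexSet n ((c : ℝ) - ((n : ℝ) - 1) / (k : ℝ)) with hΔ'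
  have hmeas : MeasurableSet Δ' := simplex_measurable n _
  have hsub : Δ' ⊆ simplexSet n (c:ℝ) := by
    rintro x ⟨h1, h2⟩
    refine ⟨h1, le_trans h2 ?_⟩
    have h3 : (0:ℝ) ≤ ((n:ℝ)-1)/(k:ℝ) := by
      apply div_nonneg _ hkpos.le
      have : (2:ℝ) ≤ (n:ℝ) := by exact_mod_cast hn
      linarith
    linarith
  haveI : Nonempty (Fin n) := ⟨⟨0, by omega⟩⟩
  set N : Set (Fin n → ℝ) := Set.range (fun q : Fin n → ℕ => fun i => (q i : ℝ)/(k:ℝ)) with hNdef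
  have hN : volume N = 0 := Set.Countable.measure_zero (Set.countable_range _) _
  -- pointwise bound on Δ' minus the lattice
  have hfg : ∀ x ∈ Δ', x ∉ N → f x ≤ g x := by
    intro x hx hxN
    set m : Fin n → ℕ := fun i => ⌊(k:ℝ) * x i⌋₊ with hm
    have hxnn : ∀ i, 0 ≤ (k:ℝ) * x i := fun i => mul_nonneg hkpos.le (hx.1 i)
    have hfl : ∀ i, (m i : ℝ) ≤ (k:ℝ) * x i := fun i => Nat.floor_le (hxnn i)
    have hfl' : ∀ i, (k:ℝ) * x i < (m i : ℝ) + 1 := fun i => Nat.lt_floor_add_one _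
    have hcube : x ∈ cube (k:ℝ) m := by
      intro i
      constructor
      · rw [div_le_iff₀ hkpos]; rw [mul_comm]; exact hfl i
      · rw [lt_div_iff₀ hkpos]; rw [mul_comm]; exact hfl' i
    have hlt : ∃ i, (m i : ℝ) < (k:ℝ) * x i := by
      by_contra h
      push_neg at h
      apply hxN
      refine ⟨m, funext fun i => ?_⟩
      have heq : (m i : ℝ) = (k:ℝ) * x i := le_antisymm (hfl i) (h i)
      show (m i : ℝ)/(k:ℝ) = x i
      rw [heq]
      field_simp
    have hsumlt : ((∑ i, m i : ℕ) : ℝ) < (k:ℝ) * ∑ i, x i := by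
      push_cast
      rw [Finset.mul_sum]
      obtain ⟨i0, hi0⟩ := hlt
      exact Finset.sum_lt_sum (fun i _ => hfl i) ⟨i0, Finset.mem_univ i0, hi0⟩
    have hbound : (k:ℝ) * ∑ i, x i ≤ (K:ℝ) - (n:ℝ) + 1 := by
      calc (k:ℝ) * ∑ i, x i ≤ (k:ℝ) * ((c:ℝ) - ((n:ℝ)-1)/(k:ℝ)) := by
            apply mul_le_mul_of_nonneg_left hx.2 hkpos.le
        _ = (K:ℝ) - (n:ℝ) + 1 := by rw [mul_sub, hKk]; field_simp; ring
    have hmsum : ∑ i, m i + n ≤ K := by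
      have h1 : ((∑ i, m i : ℕ) : ℝ) < (K:ℝ) - (n:ℝ) + 1 := lt_of_lt_of_le hsumlt hbound
      have h2 : ((∑ i, m i : ℕ) : ℝ) + (n:ℝ) < (K:ℝ) + 1 := by linarith
      have h3 : ((∑ i, m i + n : ℕ) : ℝ) < ((K + 1 : ℕ) : ℝ) := by push_cast; push_cast at h2; linarith
      have h4 : ∑ i, m i + n < K + 1 := by exact_mod_cast h3
      omega
    have hmT : m ∈ T := by
      rw [hT, Finset.mem_filter, Fintype.mem_piFinset]
      refine ⟨fun i => Finset.mem_range.mpr ?_, hmsum⟩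
      have h5 : m i ≤ ∑ j, m j := Finset.single_le_sum (fun j _ => Nat.zero_le _) (Finset.mem_univ i)
      omega
    set t : Fin n → ℝ := fun i => (k:ℝ) * x i - (m i : ℝ) with ht
    have ht0 : ∀ i, 0 ≤ t i := fun i => by have := hfl i; simp only [ht]; linarith
    have ht1 : ∀ i, t i ≤ 1 := fun i => by have := hfl' i; simp only [ht]; linarith
    have hgx : g x = ∑ S : Finset (Fin n), f (vert (k:ℝ) m S) * wgt t S := by
      show (∑ m' ∈ T, ∑ S : Finset (Fin n), f (vert (k:ℝ) m' S) * Gfun (k:ℝ) m' S x) = _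
      rw [Finset.sum_eq_single_of_mem m hmT]
      · exact Finset.sum_congr rfl fun S _ => by rw [Gfun_eq_of_mem m S hcube]
      · intro m' _ hm'
        refine Finset.sum_eq_zero fun S _ => ?_
        rw [Gfun_eq_zero m' S, mul_zero]
        intro hx'
        apply hm'
        funext i
        obtain ⟨ha, hb⟩ := mem_Ico_bounds hkpos (hx' i)
        have : ⌊(k:ℝ) * x i⌋₊ = m' i := (Nat.floor_eq_iff (hxnn i)).mpr ⟨ha, hb⟩
        simp only [hm]
        omega
    have hjensen : f x ≤ ∑ S : Finset (Fin n), wgt t S * f (vert (k:ℝ) m S) := by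
      have hx_eq : ∑ S : Finset (Fin n), wgt t S • vert (k:ℝ) m S = x := combo hk0 m x
      calc f x = f (∑ S ∈ Finset.univ, wgt t S • vert (k:ℝ) m S) := by rw [hx_eq]
        _ ≤ ∑ S ∈ Finset.univ, wgt t S * f (vert (k:ℝ) m S) :=
            hconv.map_sum_le (fun S _ => wgt_nonneg ht0 ht1 S) (sum_wgt t)
              (fun S _ => hvert_mem m hmT S)
    rw [hgx]
    refine le_trans hjensen (le_of_eq ?_)
    exact Finset.sum_congr rfl fun S _ => mul_comm _ _
  -- integral comparisons
  have h1 : ∫ x in Δ', f x ≤ ∫ x in Δ', g x := by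
    refine integral_mono_of_nonneg ?_ hg_int.integrableOn ?_
    · exact (ae_restrict_mem hmeas).mono fun x hx => hpos x (hsub hx)
    · have hNr : ∀ᵐ x ∂(volume.restrict Δ'), x ∉ N := by
        apply ae_restrict_of_ae
        rw [ae_iff]
        simpa [not_not] using hN
      exact ((ae_restrict_mem hmeas).and hNr).mono fun x ⟨ha, hb⟩ => hfg x ha hb
  have h2 : ∫ x in Δ', g x ≤ ∫ x, g x :=
    setIntegral_le_integral hg_int (ae_of_all _ hg_nonneg)
  -- the counting bound
  have h3 : ∑ m ∈ T, ∑ S : Finset (Fin n), f (vert (k:ℝ) m S)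
      ≤ 2^n * ∑ m ∈ simplexLattice n K, f fun i => (m i : ℝ) / (k : ℝ) := by
    rw [Finset.sum_comm]
    have hS : ∀ S : Finset (Fin n), ∑ m ∈ T, f (vert (k:ℝ) m S)
        ≤ ∑ m ∈ simplexLattice n K, f fun i => (m i : ℝ) / (k : ℝ) := by
      intro S
      set φ : (Fin n → ℕ) → (Fin n → ℕ) := fun m i => m i + if i ∈ S then 1 else 0 with hφ
      have himg : ∑ m ∈ T, f (vert (k:ℝ) m S)
          = ∑ m' ∈ T.image φ, f (fun i => (m' i : ℝ)/(k:ℝ)) := by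
        rw [Finset.sum_image ?_]
        · refine Finset.sum_congr rfl fun m hm => ?_
          congr 1
          funext i
          simp only [hφ, vert]
          push_cast [apply_ite (fun (z:ℕ) => (z:ℝ))]
          norm_num
        · intro a _ b _ hab
          funext i
          have := congrFun hab i
          simp only [hφ] at this
          omega
      rw [himg]
      apply Finset.sum_le_sum_of_subset_of_nonneg
      · intro α hα
        rw [Finset.mem_image] at hα
        obtain ⟨m, hm, rfl⟩ := hα
        obtain ⟨hm1, hm2⟩ := hTmem m hm
        rw [simplexLattice, Finset.mem_filter, Fintype.mem_piFinset]
        have hcard : S.card ≤ n := le_trans (Finset.card_le_univ S) (by simp)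
        have hsum : ∑ i, φ m i = ∑ i, m i + S.card := by
          simp only [hφ]
          rw [Finset.sum_add_distrib]
          congr 1
          rw [Finset.sum_ite_mem, Finset.univ_inter, Finset.card_eq_sum_ones]
        constructor
        · intro i
          rw [Finset.mem_range]
          have h5 : m i ≤ ∑ j, m j := Finset.single_le_sum (fun j _ => Nat.zero_le _) (Finset.mem_univ i)
          simp only [hφ]
          split_ifs <;> omega
        · omega
      · intro α hα _
        exact hpos _ (hlatmem α hα)
    calc ∑ S : Finset (Fin n), ∑ m ∈ T, f (vert (k:ℝ) m S)
        ≤ ∑ _S : Finset (Fin n), ∑ m ∈ simplexLattice n K, f fun i => (m i : ℝ) / (k : ℝ) :=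
          Finset.sum_le_sum fun S _ => hS S
      _ = 2^n * ∑ m ∈ simplexLattice n K, f fun i => (m i : ℝ) / (k : ℝ) := by
          rw [Finset.sum_const, Finset.card_univ, Fintype.card_finset, Fintype.card_fin,
            nsmul_eq_mul]
          push_cast
          ring
  -- put everything together
  have hfinal : (k:ℝ)^n * ((1/(2*(k:ℝ)))^n
      * (2^n * ∑ m ∈ simplexLattice n K, f fun i => (m i : ℝ) / (k : ℝ)))
      = ∑ m ∈ simplexLattice n K, f fun i => (m i : ℝ) / (k : ℝ) := by
    have hone : (k:ℝ) * (1/(2*(k:ℝ))) * 2 = 1 := by field_simp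
    calc (k:ℝ)^n * ((1/(2*(k:ℝ)))^n * (2^n * ∑ m ∈ simplexLattice n K, f fun i => (m i : ℝ) / (k : ℝ)))
        = ((k:ℝ) * (1/(2*(k:ℝ))) * 2)^n * ∑ m ∈ simplexLattice n K, f fun i => (m i : ℝ) / (k : ℝ) := by
          rw [mul_pow, mul_pow]; ring
      _ = _ := by rw [hone, one_pow, one_mul]
  calc (k : ℝ) ^ n * (∫ x in Δ', f x)
      ≤ (k:ℝ)^n * ∫ x, g x := by
        apply mul_le_mul_of_nonneg_left (h1.trans h2) (by positivity)
    _ = (k:ℝ)^n * ((1/(2*(k:ℝ)))^n * ∑ m ∈ T, ∑ S : Finset (Fin n), f (vert (k:ℝ) m S)) := by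
        rw [hg_integral]
    _ ≤ (k:ℝ)^n * ((1/(2*(k:ℝ)))^n
        * (2^n * ∑ m ∈ simplexLattice n K, f fun i => (m i : ℝ) / (k : ℝ))) := by
        apply mul_le_mul_of_nonneg_left (mul_le_mul_of_nonneg_left h3 (by positivity)) (by positivity)
    _ = ∑ m ∈ simplexLattice n K, f fun i => (m i : ℝ) / (k : ℝ) := hfinal
end

section
/- Let n ≥ 2 and c ∈ (0,1) rational, and set Δ_c = {(x_1,…,x_n) ∈ ℝ^n : x_i ≥ 0 for all i, x_1+…+x_n ≤ c}. Let L ∈ ℝ and let f : Δ_c → ℝ be convex with f(x) ≥ L for all x ∈ Δ_c. Then for every sufficiently large integer k with kc ∈ ℤ one has ∑_{α ∈ Δ_c ∩ (1/k)ℤ^n} f(α) ≥ k^n ∫_{Δ_{c−(n−1)/k}} f dμ − k^n L Vol(Δ_{c−(n−1)/k}) + L · #(Δ_c ∩ (1/k)ℤ^n), where μ is Lebesgue measure, Vol denotes Lebesgue volume, and # denotes cardinality. -/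
open MeasureTheory

namespace Stmt3Aux

open Finset

lemma mem_simplex {n : ℕ} {c : ℝ} {x : Fin n → ℝ} :
    x ∈ simplexSet n c ↔ (∀ i, 0 ≤ x i) ∧ ∑ i, x i ≤ c := Iff.rfl

lemma mem_lattice {n K : ℕ} {m : Fin n → ℕ} :
    m ∈ simplexLattice n K ↔ ∑ i, m i ≤ K := by
  constructor
  · intro h; exact (Finset.mem_filter.1 h).2
  · intro h
    refine Finset.mem_filter.2 ⟨Fintype.mem_piFinset.2 fun i => ?_, h⟩
    refine Finset.mem_range.2 (Nat.lt_succ_of_le (le_trans ?_ h))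
    exact Finset.single_le_sum (f := fun i => m i) (fun i _ => Nat.zero_le _) (mem_univ i)

lemma measSimplex (n : ℕ) (c : ℝ) : MeasurableSet (simplexSet n c) := by
  have : simplexSet n c
      = (⋂ i, {x : Fin n → ℝ | 0 ≤ x i}) ∩ {x | ∑ i, x i ≤ c} := by
    ext x; simp [simplexSet, Set.mem_iInter]
  rw [this]
  exact (MeasurableSet.iInter fun i =>
    measurableSet_le measurable_const (measurable_pi_apply i)).inter
    (measurableSet_le (by fun_prop) measurable_const)

lemma convexSimplex (n : ℕ) (c : ℝ) : Convex ℝ (simplexSet n c) := by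
  intro x hx y hy a b ha hb hab
  refine ⟨fun i => ?_, ?_⟩
  · have : (a • x + b • y) i = a * x i + b * y i := by simp
    rw [this]
    exact add_nonneg (mul_nonneg ha (hx.1 i)) (mul_nonneg hb (hy.1 i))
  · have h1 : ∑ i, (a • x + b • y) i = a * ∑ i, x i + b * ∑ i, y i := by
      simp [Finset.sum_add_distrib, Finset.mul_sum]
    rw [h1]
    calc a * ∑ i, x i + b * ∑ i, y i ≤ a * c + b * c := by
          gcongr
          exacts [hx.2, hy.2]
      _ = c := by rw [← add_mul, hab, one_mul]

lemma simplex_subset_box {n : ℕ} {c : ℝ} :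
    simplexSet n c ⊆ Set.pi Set.univ fun _ => Set.Icc 0 c := by
  intro x hx i _
  refine ⟨hx.1 i, le_trans ?_ hx.2⟩
  exact Finset.single_le_sum (f := fun i => x i) (fun j _ => hx.1 j) (mem_univ i)

lemma volSimplex_lt_top {n : ℕ} {c : ℝ} : volume (simplexSet n c) < ⊤ := by
  refine lt_of_le_of_lt (measure_mono simplex_subset_box) ?_
  rw [volume_pi_pi]
  simp only [Real.volume_Icc, sub_zero, Finset.prod_const]
  exact ENNReal.pow_lt_top ENNReal.ofReal_lt_top

lemma simplex_mono {n : ℕ} {c c' : ℝ} (h : c ≤ c') : simplexSet n c ⊆ simplexSet n c' :=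
  fun x hx => ⟨hx.1, le_trans hx.2 h⟩

lemma simplex_bddAbove {n : ℕ} {c : ℝ} (hc : 0 < c) {f : (Fin n → ℝ) → ℝ}
    (hconv : ConvexOn ℝ (simplexSet n c) f) :
    ∃ M : ℝ, ∀ x ∈ simplexSet n c, f x ≤ M := by
  classical
  set B : ℝ := |f 0| + ∑ i, |f (fun j => if j = i then c else 0)| with hB
  refine ⟨B, fun x hx => ?_⟩
  set p : Option (Fin n) → (Fin n → ℝ) :=
    fun o => Option.elim o 0 (fun i j => if j = i then c else 0) with hp
  set w : Option (Fin n) → ℝ :=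
    fun o => Option.elim o (1 - (∑ i, x i) / c) (fun i => x i / c) with hw
  have hw0 : ∀ o ∈ (univ : Finset (Option (Fin n))), 0 ≤ w o := by
    rintro (_ | i) _
    · simp only [hw, Option.elim, sub_nonneg]
      rw [div_le_one hc]
      exact hx.2
    · exact div_nonneg (hx.1 i) hc.le
  have hw1 : ∑ o : Option (Fin n), w o = 1 := by
    rw [Fintype.sum_option]
    simp only [hw, Option.elim]
    rw [← Finset.sum_div]
    ring
  have hpS : ∀ o ∈ (univ : Finset (Option (Fin n))), p o ∈ simplexSet n c := by
    rintro (_ | i) _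
    · exact ⟨fun i => le_refl 0, by simpa [hp] using hc.le⟩
    · refine ⟨fun j => by by_cases h : j = i <;> simp [hp, h, hc.le], ?_⟩
      simp [hp, Finset.sum_ite_eq]
  have hxeq : x = ∑ o : Option (Fin n), w o • p o := by
    funext j
    rw [Finset.sum_apply, Fintype.sum_option]
    simp only [hw, hp, Option.elim, Pi.smul_apply, smul_eq_mul, Pi.zero_apply, mul_zero, zero_add]
    rw [Finset.sum_congr rfl (fun i _ => by rw [mul_ite, mul_zero])]
    simp only [Finset.sum_ite_eq, mem_univ, if_true]
    exact (div_mul_cancel₀ _ hc.ne').symm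
  have hfb : ∀ o ∈ (univ : Finset (Option (Fin n))), f (p o) ≤ B := by
    rintro (_ | i) _
    · simp only [hp, Option.elim]
      refine le_trans (le_abs_self _) ?_
      rw [hB]
      have : (0:ℝ) ≤ ∑ i, |f (fun j => if j = i then c else 0)| :=
        Finset.sum_nonneg fun i _ => abs_nonneg _
      linarith
    · simp only [hp, Option.elim]
      refine le_trans (le_abs_self _) ?_
      rw [hB]
      have h1 : |f (fun j => if j = i then c else 0)|
          ≤ ∑ i, |f (fun j => if j = i then c else 0)| :=
        Finset.single_le_sum (f := fun i => |f (fun j => if j = i then c else 0)|) (fun i _ => abs_nonneg _) (mem_univ i)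
      have : (0:ℝ) ≤ |f 0| := abs_nonneg _
      linarith
  calc f x = f (∑ o : Option (Fin n), w o • p o) := by rw [← hxeq]
    _ ≤ ∑ o : Option (Fin n), w o • f (p o) := hconv.map_sum_le hw0 hw1 hpS
    _ ≤ ∑ o : Option (Fin n), w o * B := by
        refine Finset.sum_le_sum fun o ho => ?_
        exact mul_le_mul_of_nonneg_left (hfb o ho) (hw0 o ho)
    _ = B := by rw [← Finset.sum_mul, hw1, one_mul]

lemma aesm_of_convexOn {n : ℕ} {c : ℝ} {f : (Fin n → ℝ) → ℝ}
    (hconv : ConvexOn ℝ (simplexSet n c) f) :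
    AEStronglyMeasurable f (volume.restrict (simplexSet n c)) := by
  have hcx : Convex ℝ (simplexSet n c) := hconv.1
  have h1 : volume (frontier (simplexSet n c)) = 0 := hcx.addHaar_frontier volume
  have h2 : simplexSet n c =ᵐ[volume] interior (simplexSet n c) := by
    rw [MeasureTheory.ae_eq_set]
    constructor
    · refine measure_mono_null ?_ h1
      intro x hx
      exact ⟨subset_closure hx.1, hx.2⟩
    · refine measure_mono_null ?_ (measure_empty (μ := volume))
      · intro x hx; exact hx.2 (interior_subset hx.1)
  rw [Measure.restrict_congr_set h2]
  exact ((hconv.subset interior_subset hcx.interior).continuousOn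
    isOpen_interior).aestronglyMeasurable isOpen_interior.measurableSet

lemma sum_weights {n : ℕ} (t : Fin n → ℝ) :
    ∑ e : Fin n → Bool, ∏ i, (if e i then t i else 1 - t i) = 1 := by
  rw [← Fintype.prod_sum (fun (i : Fin n) (b : Bool) => if b then t i else 1 - t i)]
  have : ∀ i : Fin n, (∑ b : Bool, if b then t i else 1 - t i) = 1 := by
    intro i; rw [Fintype.sum_bool]; norm_num
  simp [this]

lemma sum_weights_coord {n : ℕ} (t : Fin n → ℝ) (j : Fin n) :
    ∑ e : Fin n → Bool,
      (∏ i, (if e i then t i else 1 - t i)) * (if e j then 1 else 0) = t j := by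
  classical
  set F : Fin n → Bool → ℝ :=
    fun i b => (if b then t i else 1 - t i) * (if i = j then (if b then 1 else 0) else 1) with hF
  have key : ∀ e : Fin n → Bool,
      (∏ i, (if e i then t i else 1 - t i)) * (if e j then 1 else 0) = ∏ i, F i (e i) := by
    intro e
    rw [hF]
    rw [Finset.prod_mul_distrib]
    congr 1
    rw [Finset.prod_ite_eq' univ j (fun i => if e i then (1:ℝ) else 0)]
    simp
  rw [Finset.sum_congr rfl fun e _ => key e, ← Fintype.prod_sum F]
  rw [Fintype.prod_eq_single j]
  · rw [hF]; simp
  · intro i hi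
    rw [hF]
    norm_num [if_neg hi, Fintype.sum_bool]

lemma integral_tri (k a : ℝ) (hk : 0 < k) :
    ∫ s in Set.Ico a (a + 1/k), k * (s - a) = 1 / (2*k) := by
  rw [MeasureTheory.integral_Ico_eq_integral_Ioo, ← MeasureTheory.integral_Ioc_eq_integral_Ioo,
    ← intervalIntegral.integral_of_le (by linarith [one_div_pos.2 hk] : a ≤ a + 1/k)]
  rw [intervalIntegral.integral_const_mul,
    intervalIntegral.integral_sub intervalIntegral.intervalIntegrable_id
      (intervalIntegrable_const), integral_id, intervalIntegral.integral_const]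
  simp only [smul_eq_mul]
  field_simp
  ring

lemma integral_tri' (k a : ℝ) (hk : 0 < k) :
    ∫ s in Set.Ico a (a + 1/k), (1 - k * (s - a)) = 1 / (2*k) := by
  have h1 : IntegrableOn (fun _ : ℝ => (1:ℝ)) (Set.Ico a (a + 1/k)) volume := by
    refine integrableOn_const (ne_of_lt ?_)
    rw [Real.volume_Ico]; exact ENNReal.ofReal_lt_top
  have h2 : IntegrableOn (fun s : ℝ => k * (s - a)) (Set.Ico a (a + 1/k)) volume := by
    exact ((Continuous.integrableOn_Icc (by fun_prop))).mono_set Set.Ico_subset_Icc_self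
  rw [MeasureTheory.integral_sub h1 h2, integral_tri k a hk, setIntegral_const]
  rw [measureReal_def, Real.volume_Ico]
  have : a + 1/k - a = 1/k := by ring
  rw [this, ENNReal.toReal_ofReal (by positivity : (0:ℝ) ≤ 1/k)]
  simp only [smul_eq_mul]
  field_simp
  ring

lemma integral_weight {n : ℕ} {k : ℝ} (hk : 0 < k) (a : Fin n → ℝ) (e : Fin n → Bool) :
    ∫ x in Set.pi Set.univ (fun i => Set.Ico (a i) (a i + 1/k)),
      ∏ i, (if e i then k * (x i - a i) else 1 - k * (x i - a i)) = (1/(2*k))^n := by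
  classical
  set φ : Fin n → ℝ → ℝ :=
    fun i s => if e i then k * (s - a i) else 1 - k * (s - a i) with hφ
  set I : Fin n → Set ℝ := fun i => Set.Ico (a i) (a i + 1/k) with hI
  have hmeas : MeasurableSet (Set.pi Set.univ I) :=
    MeasurableSet.univ_pi fun i => measurableSet_Ico
  rw [← MeasureTheory.integral_indicator hmeas]
  have hind : (Set.pi Set.univ I).indicator (fun x => ∏ i, φ i (x i))
      = fun x => ∏ i, (I i).indicator (φ i) (x i) := by
    funext x
    by_cases hx : x ∈ Set.pi Set.univ I
    · rw [Set.indicator_of_mem hx]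
      exact Finset.prod_congr rfl fun i _ =>
        (Set.indicator_of_mem (hx i (Set.mem_univ i)) _).symm
    · rw [Set.indicator_of_notMem hx]
      rw [Set.mem_pi] at hx
      push_neg at hx
      obtain ⟨i, _, hi⟩ := hx
      exact (Finset.prod_eq_zero (mem_univ i) (Set.indicator_of_notMem hi _)).symm
  rw [hind]
  rw [MeasureTheory.volume_pi]
  beta_reduce
  rw [MeasureTheory.integral_fintype_prod_eq_prod (ι := Fin n)
    (fun i s => (I i).indicator (φ i) s)]
  have : ∀ i : Fin n, ∫ s, (I i).indicator (φ i) s = 1/(2*k) := by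
    intro i
    rw [MeasureTheory.integral_indicator measurableSet_Ico]
    by_cases h : e i
    · simp only [hφ, if_pos h]
      exact integral_tri k (a i) hk
    · simp only [hφ, if_neg h]
      exact integral_tri' k (a i) hk
  rw [Finset.prod_congr rfl fun i _ => this i, Finset.prod_const, Finset.card_univ,
    Fintype.card_fin]

lemma cube_bound {n : ℕ} {S : Set (Fin n → ℝ)} {g : (Fin n → ℝ) → ℝ}
    (hg : ConvexOn ℝ S g) {k : ℝ} (hk : 0 < k) (a : Fin n → ℝ)
    (hv : ∀ e : Fin n → Bool, (fun i => a i + (if e i then 1 else 0)/k) ∈ S)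
    (hgint : IntegrableOn g (Set.pi Set.univ fun i => Set.Ico (a i) (a i + 1/k)) volume) :
    ∫ x in Set.pi Set.univ (fun i => Set.Ico (a i) (a i + 1/k)), g x
      ≤ (1/(2*k))^n * ∑ e : Fin n → Bool, g (fun i => a i + (if e i then 1 else 0)/k) := by
  classical
  set Q : Set (Fin n → ℝ) := Set.pi Set.univ fun i => Set.Ico (a i) (a i + 1/k) with hQ
  set v : (Fin n → Bool) → (Fin n → ℝ) := fun e => fun i => a i + (if e i then 1 else 0)/k with hv'
  set w : (Fin n → Bool) → (Fin n → ℝ) → ℝ :=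
    fun e x => ∏ i, (if e i then k * (x i - a i) else 1 - k * (x i - a i)) with hw
  have hpt : ∀ x ∈ Q, g x ≤ ∑ e : Fin n → Bool, w e x * g (v e) := by
    intro x hx
    have ht0 : ∀ i, 0 ≤ k * (x i - a i) := fun i =>
      mul_nonneg hk.le (sub_nonneg.2 (hx i (Set.mem_univ i)).1)
    have ht1 : ∀ i, k * (x i - a i) ≤ 1 := by
      intro i
      have h2 := (hx i (Set.mem_univ i)).2
      have : x i - a i < 1/k := by linarith
      have := mul_lt_mul_of_pos_left this hk
      rw [mul_one_div, div_self hk.ne'] at this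
      linarith
    have hw0 : ∀ e ∈ (univ : Finset (Fin n → Bool)), 0 ≤ w e x := by
      intro e _
      refine Finset.prod_nonneg fun i _ => ?_
      by_cases h : e i
      · rw [if_pos h]; exact ht0 i
      · rw [if_neg h]; linarith [ht1 i]
    have hw1 : ∑ e : Fin n → Bool, w e x = 1 := sum_weights _
    have hxe : ∑ e : Fin n → Bool, w e x • v e = x := by
      funext j
      rw [Finset.sum_apply]
      have hterm : ∀ e : Fin n → Bool, (w e x • v e) j
          = w e x * a j + (1/k) * (w e x * (if e j then 1 else 0)) := by
        intro e
        by_cases h : e j <;> simp only [hv', Pi.smul_apply, smul_eq_mul, if_pos, if_neg, h,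
          if_true, if_false] <;> ring
      rw [Finset.sum_congr rfl fun e _ => hterm e, Finset.sum_add_distrib, ← Finset.sum_mul,
        hw1, ← Finset.mul_sum]
      rw [hw]
      rw [sum_weights_coord (fun i => k * (x i - a i)) j]
      field_simp
      ring
    calc g x = g (∑ e : Fin n → Bool, w e x • v e) := by rw [hxe]
      _ ≤ ∑ e : Fin n → Bool, w e x • g (v e) :=
          hg.map_sum_le hw0 hw1 (fun e _ => hv e)
      _ = ∑ e : Fin n → Bool, w e x * g (v e) := rfl
  have hQm : MeasurableSet Q := MeasurableSet.univ_pi fun i => measurableSet_Ico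
  have hwcont : ∀ e : Fin n → Bool, Continuous (fun x => w e x) := by
    intro e
    refine continuous_finset_prod _ fun i _ => ?_
    by_cases h : e i
    · simp only [if_pos h]; fun_prop
    · simp only [if_neg h]; fun_prop
  have hwint : ∀ e ∈ (univ : Finset (Fin n → Bool)),
      IntegrableOn (fun x => w e x * g (v e)) Q volume := by
    intro e _
    have : Continuous (fun x => w e x * g (v e)) := (hwcont e).mul continuous_const
    exact (this.continuousOn.integrableOn_compact
      (isCompact_univ_pi fun i => isCompact_Icc)).mono_set
      (Set.pi_mono fun i _ => Set.Ico_subset_Icc_self)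
  calc ∫ x in Q, g x ≤ ∫ x in Q, ∑ e : Fin n → Bool, w e x * g (v e) :=
        setIntegral_mono_on hgint (integrable_finset_sum _ hwint) hQm hpt
    _ = ∑ e : Fin n → Bool, ∫ x in Q, w e x * g (v e) :=
        integral_finset_sum _ hwint
    _ = ∑ e : Fin n → Bool, (∫ x in Q, w e x) * g (v e) := by
        exact Finset.sum_congr rfl fun e _ => integral_mul_const _ _
    _ = ∑ e : Fin n → Bool, (1/(2*k))^n * g (v e) := by
        refine Finset.sum_congr rfl fun e _ => ?_
        rw [hw, hQ, integral_weight hk a e]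
    _ = (1/(2*k))^n * ∑ e : Fin n → Bool, g (v e) := by rw [Finset.mul_sum]

end Stmt3Aux

open Stmt3Aux Finset

set_option maxHeartbeats 1600000

/-- Inequality (6.4): if `f` is convex on `Δ_c` with `f ≥ L`, then for all
sufficiently large `k` with `kc ∈ ℤ`,
`∑_{α ∈ Δ_c ∩ (1/k)ℤⁿ} f(α) ≥ kⁿ ∫_{Δ_{c−(n−1)/k}} f dμ − kⁿ L Vol(Δ_{c−(n−1)/k})
  + L · #(Δ_c ∩ (1/k)ℤⁿ)`. -/
theorem stmt_3 (n : ℕ) (hn : 2 ≤ n) (c : ℚ) (hc0 : 0 < c) (hc1 : c < 1)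
    (L : ℝ) (f : (Fin n → ℝ) → ℝ)
    (hconv : ConvexOn ℝ (simplexSet n (c : ℝ)) f)
    (hL : ∀ x ∈ simplexSet n (c : ℝ), L ≤ f x) :
    ∃ k₀ : ℕ, ∀ k : ℕ, k₀ ≤ k → ∀ K : ℕ, (k : ℝ) * (c : ℝ) = (K : ℝ) →
      (k : ℝ) ^ n * (∫ x in simplexSet n ((c : ℝ) - ((n : ℝ) - 1) / (k : ℝ)), f x)
        - (k : ℝ) ^ n * L *
            (volume (simplexSet n ((c : ℝ) - ((n : ℝ) - 1) / (k : ℝ)))).toReal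
        + L * ((simplexLattice n K).card : ℝ)
      ≤ ∑ m ∈ simplexLattice n K, f fun i => (m i : ℝ) / (k : ℝ) := by
  classical
  have hc0' : (0:ℝ) < (c:ℝ) := by exact_mod_cast hc0
  obtain ⟨M, hM⟩ := simplex_bddAbove hc0' hconv
  have hsm : AEStronglyMeasurable f (volume.restrict (simplexSet n (c:ℝ))) :=
    aesm_of_convexOn hconv
  set C : ℝ := |M| + |L| with hC
  have hCb : ∀ x ∈ simplexSet n (c:ℝ), ‖f x‖ ≤ C := by
    intro x hx
    rw [Real.norm_eq_abs, abs_le]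
    constructor
    · nlinarith [hL x hx, neg_abs_le L, abs_nonneg M, abs_nonneg L]
    · nlinarith [hM x hx, le_abs_self M, abs_nonneg L]
  have hintf : ∀ T : Set (Fin n → ℝ), MeasurableSet T → T ⊆ simplexSet n (c:ℝ) →
      IntegrableOn f T volume := by
    intro T hTm hTS
    have hTfin : volume T < ⊤ := lt_of_le_of_lt (measure_mono hTS) volSimplex_lt_top
    have hmeasT : AEStronglyMeasurable f (volume.restrict T) := by
      have h := hsm.restrict (s := T)
      rwa [Measure.restrict_restrict hTm, Set.inter_eq_self_of_subset_left hTS] at h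
    refine ⟨hmeasT, ?_⟩
    apply MeasureTheory.HasFiniteIntegral.restrict_of_bounded (C := C) hTfin
    exact (MeasureTheory.ae_restrict_iff' hTm).2
      (Filter.Eventually.of_forall fun x hx => hCb x (hTS hx))
  set g : (Fin n → ℝ) → ℝ := fun x => f x - L with hgdef
  have hgconv : ConvexOn ℝ (simplexSet n (c:ℝ)) g :=
    hconv.sub (concaveOn_const L (convexSimplex n (c:ℝ)))
  have hgnn : ∀ x ∈ simplexSet n (c:ℝ), 0 ≤ g x := fun x hx => sub_nonneg.2 (hL x hx)
  have hintg : ∀ T : Set (Fin n → ℝ), MeasurableSet T → T ⊆ simplexSet n (c:ℝ) →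
      IntegrableOn g T volume := by
    intro T hTm hTS
    have hTfin : volume T < ⊤ := lt_of_le_of_lt (measure_mono hTS) volSimplex_lt_top
    exact (hintf T hTm hTS).sub (integrableOn_const hTfin.ne)
  refine ⟨max 1 (⌈(n:ℚ)/c⌉.toNat), fun k hk K hKc => ?_⟩
  have hk1 : 1 ≤ k := le_trans (le_max_left _ _) hk
  have hkpos : (0:ℝ) < (k:ℝ) := by exact_mod_cast hk1
  have hKn : n ≤ K := by
    have h1 : ((⌈(n:ℚ)/c⌉.toNat : ℕ) : ℚ) ≤ (k:ℚ) := by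
      exact_mod_cast le_trans (le_max_right _ _) hk
    have h2 : (n:ℚ)/c ≤ ((⌈(n:ℚ)/c⌉.toNat : ℕ) : ℚ) := by
      calc (n:ℚ)/c ≤ (⌈(n:ℚ)/c⌉ : ℚ) := Int.le_ceil _
        _ ≤ ((⌈(n:ℚ)/c⌉.toNat : ℤ) : ℚ) := by exact_mod_cast Int.self_le_toNat _
        _ = ((⌈(n:ℚ)/c⌉.toNat : ℕ) : ℚ) := by push_cast; ring
    have h3 : (n:ℚ) ≤ (k:ℚ) * c := by
      rw [div_le_iff₀ hc0] at h2
      calc (n:ℚ) ≤ ((⌈(n:ℚ)/c⌉.toNat : ℕ) : ℚ) * c := h2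
        _ ≤ (k:ℚ) * c := by gcongr
    have h4 : (n:ℝ) ≤ (k:ℝ) * (c:ℝ) := by exact_mod_cast h3
    rw [hKc] at h4
    exact_mod_cast h4
  set c' : ℝ := (c:ℝ) - ((n:ℝ) - 1) / (k:ℝ) with hc'def
  set K' : ℕ := K - n with hK'def
  have hK'r : (K' : ℝ) = (K:ℝ) - (n:ℝ) := by
    rw [hK'def]; push_cast [hKn]; ring
  have hcc' : (k:ℝ) * c' = (K:ℝ) - (n:ℝ) + 1 := by
    rw [hc'def, mul_sub, hKc, mul_div_cancel₀ _ hkpos.ne']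
    ring
  have hc'c : c' ≤ (c:ℝ) := by
    rw [hc'def]
    have h1 : (0:ℝ) ≤ ((n:ℝ) - 1) / (k:ℝ) := by
      apply div_nonneg _ hkpos.le
      have : (2:ℝ) ≤ (n:ℝ) := by exact_mod_cast hn
      linarith
    linarith
  -- cubes
  set Q : (Fin n → ℕ) → Set (Fin n → ℝ) :=
    fun m => Set.pi Set.univ fun i => Set.Ico ((m i : ℝ)/(k:ℝ)) ((m i : ℝ)/(k:ℝ) + 1/(k:ℝ))
    with hQdef
  have hQmeas : ∀ m, MeasurableSet (Q m) :=
    fun m => MeasurableSet.univ_pi fun i => measurableSet_Ico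
  set A : Finset (Fin n → ℕ) := simplexLattice n K' with hAdef
  have hsumA : ∀ m ∈ A, ((∑ i, m i : ℕ) : ℝ) + (n:ℝ) ≤ (K:ℝ) := by
    intro m hm
    have h1 : ∑ i, m i ≤ K' := mem_lattice.1 hm
    have h2 : ((∑ i, m i : ℕ):ℝ) ≤ (K':ℝ) := by exact_mod_cast h1
    rw [hK'r] at h2
    linarith
  have hKk : (K:ℝ)/(k:ℝ) = (c:ℝ) := by
    rw [← hKc, mul_comm, mul_div_assoc, div_self hkpos.ne', mul_one]
  have hQS : ∀ m ∈ A, Q m ⊆ simplexSet n (c:ℝ) := by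
    intro m hm x hx
    refine ⟨fun i => le_trans (by positivity) (hx i (Set.mem_univ i)).1, ?_⟩
    have h1 : ∑ i, x i ≤ ∑ i, ((m i : ℝ)/(k:ℝ) + 1/(k:ℝ)) :=
      Finset.sum_le_sum fun i _ => le_of_lt (hx i (Set.mem_univ i)).2
    have h2 : ∑ i, ((m i : ℝ)/(k:ℝ) + 1/(k:ℝ)) = (((∑ i, m i : ℕ):ℝ) + (n:ℝ))/(k:ℝ) := by
      rw [Finset.sum_add_distrib, ← Finset.sum_div, Finset.sum_const, Finset.card_univ,
        Fintype.card_fin, nsmul_eq_mul]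
      push_cast
      ring
    have h3 : (((∑ i, m i : ℕ):ℝ) + (n:ℝ))/(k:ℝ) ≤ (K:ℝ)/(k:ℝ) :=
      div_le_div_of_nonneg_right (hsumA m hm) hkpos.le
    rw [hKk] at h3
    linarith [h1, h2 ▸ h1]
  -- vertices
  set v : (Fin n → ℕ) → (Fin n → Bool) → (Fin n → ℝ) :=
    fun m e => fun i => (m i : ℝ)/(k:ℝ) + (if e i then 1 else 0)/(k:ℝ) with hvdef
  have hvS : ∀ m ∈ A, ∀ e : Fin n → Bool, v m e ∈ simplexSet n (c:ℝ) := by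
    intro m hm e
    refine ⟨fun i => by positivity, ?_⟩
    have h2 : ∑ i, v m e i = (((∑ i, m i : ℕ):ℝ) + ∑ i, (if e i then (1:ℝ) else 0))/(k:ℝ) := by
      rw [hvdef]
      simp only []
      rw [Finset.sum_add_distrib, ← Finset.sum_div, ← Finset.sum_div, ← add_div]
      push_cast
      ring
    have h4 : ∑ i, (if e i then (1:ℝ) else 0) ≤ (n:ℝ) := by
      calc ∑ i, (if e i then (1:ℝ) else 0) ≤ ∑ _i : Fin n, (1:ℝ) :=
            Finset.sum_le_sum fun i _ => by by_cases h : e i <;> simp [h]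
        _ = (n:ℝ) := by simp
    have h5 : ∑ i, v m e i ≤ (K:ℝ)/(k:ℝ) := by
      rw [h2]
      exact div_le_div_of_nonneg_right (by linarith [hsumA m hm]) hkpos.le
    rw [hKk] at h5
    exact h5
  -- per-cube bound
  have hcube : ∀ m ∈ A, ∫ x in Q m, g x
      ≤ (1/(2*(k:ℝ)))^n * ∑ e : Fin n → Bool, g (v m e) := by
    intro m hm
    exact cube_bound hgconv hkpos (fun i => (m i : ℝ)/(k:ℝ)) (hvS m hm) (hintg _ (hQmeas m) (hQS m hm))
  -- floors
  have hfloor : ∀ (m : Fin n → ℕ) (x : Fin n → ℝ), x ∈ Q m → ∀ i, ⌊(k:ℝ) * x i⌋₊ = m i := by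
    intro m x hx i
    have h1 := (hx i (Set.mem_univ i)).1
    have h2 := (hx i (Set.mem_univ i)).2
    rw [Nat.floor_eq_iff]
    constructor
    · calc (m i : ℝ) = (k:ℝ) * ((m i : ℝ)/(k:ℝ)) := by field_simp
        _ ≤ (k:ℝ) * x i := by gcongr
    · calc (k:ℝ) * x i < (k:ℝ) * ((m i : ℝ)/(k:ℝ) + 1/(k:ℝ)) := by gcongr
        _ = (m i : ℝ) + 1 := by field_simp
    · have : (0:ℝ) ≤ (m i : ℝ)/(k:ℝ) := by positivity
      nlinarith
  have hdisj : Set.Pairwise (A : Set (Fin n → ℕ)) (Function.onFun Disjoint Q) := by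
    intro m _ m' _ hne
    rw [Function.onFun, Set.disjoint_left]
    intro x hxm hxm'
    apply hne
    funext i
    rw [← hfloor m x hxm i, hfloor m' x hxm' i]
  -- covering
  set i0 : Fin n := ⟨0, by omega⟩ with hi0
  set N : Set (Fin n → ℝ) := ⋃ (j : ℕ), {x : Fin n → ℝ | x i0 = (j:ℝ)/(k:ℝ)} with hNdef
  have hNnull : volume N = 0 := by
    rw [hNdef]
    refine measure_iUnion_null fun j => ?_
    have h := MeasureTheory.Measure.pi_hyperplane (fun _ : Fin n => (volume : Measure ℝ))
      i0 ((j:ℝ)/(k:ℝ))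
    rw [MeasureTheory.volume_pi]
    exact h
  set U : Set (Fin n → ℝ) := ⋃ m ∈ A, Q m with hUdef
  have hUmeas : MeasurableSet U :=
    MeasurableSet.biUnion A.countable_toSet fun m _ => hQmeas m
  have hUS : U ⊆ simplexSet n (c:ℝ) := Set.iUnion₂_subset hQS
  have hcov : simplexSet n c' ⊆ U ∪ N := by
    intro x hx
    set m : Fin n → ℕ := fun i => ⌊(k:ℝ) * x i⌋₊ with hmdef
    have hx0 : ∀ i, 0 ≤ x i := hx.1
    have hkx0 : ∀ i, 0 ≤ (k:ℝ) * x i := fun i => mul_nonneg hkpos.le (hx0 i)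
    have hxQ : x ∈ Q m := by
      intro i _
      constructor
      · rw [div_le_iff₀ hkpos]
        calc (m i : ℝ) ≤ (k:ℝ) * x i := Nat.floor_le (hkx0 i)
          _ = x i * (k:ℝ) := by ring
      · rw [← add_div, lt_div_iff₀ hkpos]
        calc x i * (k:ℝ) = (k:ℝ) * x i := by ring
          _ < (m i : ℝ) + 1 := Nat.lt_floor_add_one _
    by_cases hmA : ∑ i, m i ≤ K'
    · left
      exact Set.mem_biUnion (mem_lattice.2 hmA) hxQ
    · right
      -- all coordinates are lattice
      have h1 : ∀ i, (m i : ℝ) ≤ (k:ℝ) * x i := fun i => Nat.floor_le (hkx0 i)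
      have h2 : ∑ i, (k:ℝ) * x i ≤ (K:ℝ) - (n:ℝ) + 1 := by
        rw [← Finset.mul_sum, ← hcc']
        exact mul_le_mul_of_nonneg_left hx.2 hkpos.le
      have h3 : (K:ℝ) - (n:ℝ) + 1 ≤ ((∑ i, m i : ℕ) : ℝ) := by
        have : K' + 1 ≤ ∑ i, m i := Nat.succ_le_of_lt (Nat.lt_of_not_le hmA)
        have h4 : ((K' + 1 : ℕ):ℝ) ≤ ((∑ i, m i : ℕ):ℝ) := by exact_mod_cast this
        rw [Nat.cast_add, Nat.cast_one, hK'r] at h4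
        linarith
      have hzero : ∀ i ∈ (univ : Finset (Fin n)), (k:ℝ) * x i - (m i : ℝ) = 0 := by
        rw [← Finset.sum_eq_zero_iff_of_nonneg (fun i _ => sub_nonneg.2 (h1 i))]
        have hle : ∑ i, ((k:ℝ) * x i - (m i : ℝ)) ≤ 0 := by
          rw [Finset.sum_sub_distrib]
          push_cast at h3 ⊢
          linarith
        have hge : 0 ≤ ∑ i, ((k:ℝ) * x i - (m i : ℝ)) :=
          Finset.sum_nonneg fun i _ => sub_nonneg.2 (h1 i)
        linarith
      have : x i0 = ((m i0 : ℕ):ℝ)/(k:ℝ) := by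
        have h5 := hzero i0 (mem_univ i0)
        field_simp
        linarith
      exact Set.mem_iUnion.2 ⟨m i0, this⟩
  -- the simplex at c' is measurable, contained in S
  have hΔ'meas : MeasurableSet (simplexSet n c') := measSimplex n c'
  have hΔ'S : simplexSet n c' ⊆ simplexSet n (c:ℝ) := simplex_mono hc'c
  -- step 1
  have step1 : ∫ x in simplexSet n c', g x ≤ ∫ x in U, g x := by
    refine setIntegral_mono_set (hintg U hUmeas hUS) ?_ ?_
    · exact (MeasureTheory.ae_restrict_iff' hUmeas).2
        (Filter.Eventually.of_forall fun x hx => hgnn x (hUS hx))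
    · rw [MeasureTheory.ae_le_set]
      refine measure_mono_null ?_ hNnull
      intro x hx
      rcases hcov hx.1 with h | h
      · exact absurd h hx.2
      · exact h
  -- step 2
  have step2 : ∫ x in U, g x = ∑ m ∈ A, ∫ x in Q m, g x :=
    integral_biUnion_finset A (fun m _ => hQmeas m) hdisj
      (fun m hm => hintg _ (hQmeas m) (hQS m hm))
  -- step 3: counting
  have hπ : ∀ (m : Fin n → ℕ) (e : Fin n → Bool),
      v m e = fun i => (((m i + if e i then 1 else 0 : ℕ)):ℝ)/(k:ℝ) := by
    intro m e
    funext i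
    rw [hvdef]
    by_cases h : e i <;> push_cast [h] <;> ring
  have step3 : ∑ m ∈ A, ∑ e : Fin n → Bool, g (v m e)
      ≤ (2:ℝ)^n * ∑ α ∈ simplexLattice n K, g (fun i => (α i : ℝ)/(k:ℝ)) := by
    set π : (Fin n → ℕ) × (Fin n → Bool) → (Fin n → ℕ) :=
      fun p => fun i => p.1 i + (if p.2 i then 1 else 0) with hπdef
    set h : (Fin n → ℕ) → ℝ := fun α => g (fun i => (α i : ℝ)/(k:ℝ)) with hhdef
    have hrw : ∑ m ∈ A, ∑ e : Fin n → Bool, g (v m e)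
        = ∑ p ∈ A ×ˢ (univ : Finset (Fin n → Bool)), h (π p) := by
      rw [Finset.sum_product]
      refine Finset.sum_congr rfl fun m _ => Finset.sum_congr rfl fun e _ => ?_
      rw [hπ m e]
    have himg : ∀ p ∈ A ×ˢ (univ : Finset (Fin n → Bool)), π p ∈ simplexLattice n K := by
      rintro ⟨m, e⟩ hp
      rw [Finset.mem_product] at hp
      refine mem_lattice.2 ?_
      have h1 : ∑ i, m i ≤ K' := mem_lattice.1 hp.1
      have h2 : ∑ i, (if e i then 1 else 0) ≤ n := by
        calc ∑ i, (if e i then 1 else 0) ≤ ∑ _i : Fin n, 1 :=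
              Finset.sum_le_sum fun i _ => by by_cases hh : e i <;> simp [hh]
          _ = n := by simp
      calc ∑ i, (m i + if e i then 1 else 0) = ∑ i, m i + ∑ i, (if e i then 1 else 0) :=
            Finset.sum_add_distrib
        _ ≤ K' + n := Nat.add_le_add h1 h2
        _ ≤ K := by omega
    have hh0 : ∀ α ∈ simplexLattice n K, 0 ≤ h α := by
      intro α hα
      refine hgnn _ ?_
      refine ⟨fun i => by positivity, ?_⟩
      rw [← Finset.sum_div]
      rw [div_le_iff₀ hkpos]
      have h1 : ((∑ i, α i : ℕ):ℝ) ≤ (K:ℝ) := by exact_mod_cast mem_lattice.1 hα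
      push_cast at h1
      rw [← hKc] at h1
      nlinarith
    have hfib : ∀ b, ((A ×ˢ (univ : Finset (Fin n → Bool))).filter fun p => π p = b).card
        ≤ 2^n := by
      intro b
      have hinj : Set.InjOn (fun p : (Fin n → ℕ) × (Fin n → Bool) => p.2)
          (((A ×ˢ (univ : Finset (Fin n → Bool))).filter fun p => π p = b) : Set _) := by
        rintro ⟨m, e⟩ hp ⟨m', e'⟩ hq heq
        simp only at heq
        subst heq
        simp only [Finset.coe_filter, Set.mem_setOf_eq] at hp hq
        have : m = m' := by
          funext i
          have h1 := congrFun hp.2 i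
          have h2 := congrFun hq.2 i
          simp only [hπdef] at h1 h2
          omega
        rw [this]
      calc ((A ×ˢ (univ : Finset (Fin n → Bool))).filter fun p => π p = b).card
          ≤ (univ : Finset (Fin n → Bool)).card := by
            apply Finset.card_le_card_of_injOn (fun p => p.2) (fun p _ => mem_univ _) hinj
        _ = 2^n := by simp
    calc ∑ m ∈ A, ∑ e : Fin n → Bool, g (v m e)
        = ∑ p ∈ A ×ˢ (univ : Finset (Fin n → Bool)), h (π p) := hrw
      _ = ∑ b ∈ (A ×ˢ (univ : Finset (Fin n → Bool))).image π,
            ((A ×ˢ (univ : Finset (Fin n → Bool))).filter fun p => π p = b).card • h b :=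
          Finset.sum_comp h π
      _ ≤ ∑ b ∈ (A ×ˢ (univ : Finset (Fin n → Bool))).image π, (2:ℝ)^n * h b := by
          refine Finset.sum_le_sum fun b hb => ?_
          rw [nsmul_eq_mul]
          have hbK : b ∈ simplexLattice n K := by
            obtain ⟨p, hp, rfl⟩ := Finset.mem_image.1 hb
            exact himg p hp
          refine mul_le_mul_of_nonneg_right ?_ (hh0 b hbK)
          calc (((A ×ˢ (univ : Finset (Fin n → Bool))).filter fun p => π p = b).card : ℝ)
              ≤ ((2^n : ℕ) : ℝ) := by exact_mod_cast hfib b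
            _ = (2:ℝ)^n := by push_cast; ring
      _ ≤ ∑ b ∈ simplexLattice n K, (2:ℝ)^n * h b := by
          refine Finset.sum_le_sum_of_subset_of_nonneg ?_ ?_
          · intro b hb
            obtain ⟨p, hp, rfl⟩ := Finset.mem_image.1 hb
            exact himg p hp
          · intro b hb _
            exact mul_nonneg (by positivity) (hh0 b hb)
      _ = (2:ℝ)^n * ∑ α ∈ simplexLattice n K, g (fun i => (α i : ℝ)/(k:ℝ)) := by
          simp only [hhdef, ← Finset.mul_sum]
  -- assemble for g
  have main : (k:ℝ)^n * ∫ x in simplexSet n c', g x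
      ≤ ∑ α ∈ simplexLattice n K, g (fun i => (α i : ℝ)/(k:ℝ)) := by
    have hhalf : (k:ℝ)^n * (1/(2*(k:ℝ)))^n = (1/2:ℝ)^n := by
      rw [← mul_pow]
      congr 1
      field_simp
    calc (k:ℝ)^n * ∫ x in simplexSet n c', g x
        ≤ (k:ℝ)^n * ∫ x in U, g x := by
          exact mul_le_mul_of_nonneg_left step1 (by positivity)
      _ = (k:ℝ)^n * ∑ m ∈ A, ∫ x in Q m, g x := by rw [step2]
      _ ≤ (k:ℝ)^n * ∑ m ∈ A, (1/(2*(k:ℝ)))^n * ∑ e : Fin n → Bool, g (v m e) := by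
          refine mul_le_mul_of_nonneg_left (Finset.sum_le_sum hcube) (by positivity)
      _ = (1/2:ℝ)^n * ∑ m ∈ A, ∑ e : Fin n → Bool, g (v m e) := by
          rw [← Finset.mul_sum, ← mul_assoc, hhalf]
      _ ≤ (1/2:ℝ)^n * ((2:ℝ)^n * ∑ α ∈ simplexLattice n K, g (fun i => (α i : ℝ)/(k:ℝ))) := by
          refine mul_le_mul_of_nonneg_left step3 (by positivity)
      _ = ∑ α ∈ simplexLattice n K, g (fun i => (α i : ℝ)/(k:ℝ)) := by
          rw [← mul_assoc, ← mul_pow]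
          norm_num
  -- convert back to f
  have hvolfin : volume (simplexSet n c') < ⊤ := volSimplex_lt_top
  have hintfΔ' : IntegrableOn f (simplexSet n c') volume := hintf _ hΔ'meas hΔ'S
  have eqI : ∫ x in simplexSet n c', g x
      = (∫ x in simplexSet n c', f x) - L * (volume (simplexSet n c')).toReal := by
    rw [hgdef]
    rw [MeasureTheory.integral_sub hintfΔ' (integrableOn_const hvolfin.ne)]
    rw [MeasureTheory.setIntegral_const, measureReal_def]
    rw [smul_eq_mul]
    ring
  have eqS : ∑ α ∈ simplexLattice n K, g (fun i => (α i : ℝ)/(k:ℝ))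
      = (∑ α ∈ simplexLattice n K, f (fun i => (α i : ℝ)/(k:ℝ)))
        - L * ((simplexLattice n K).card : ℝ) := by
    rw [hgdef]
    rw [Finset.sum_sub_distrib, Finset.sum_const, nsmul_eq_mul]
    ring
  rw [eqI, eqS] at main
  have hfinal := main
  nlinarith [hfinal]
end

section
/- Let d ≥ 1 and let x_1, …, x_d be real numbers with mean μ = (x_1 + … + x_d)/d. Let a < b be real numbers and m ≥ 1 an integer, and suppose that at least m of the indices i satisfy x_i ≤ a and at least m of the indices i satisfy x_i ≥ b. Then ∑_{i=1}^d (x_i − μ)^2 ≥ (m/2)(b − a)^2. -/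
/-- If among `x_1, …, x_d` at least `m` values are `≤ a` and at least `m` values are
`≥ b`, with `a < b`, then the sum of squared deviations from the mean is at least
`(m/2)(b−a)²`. -/
theorem stmt_5 (d m : ℕ) (hd : 1 ≤ d) (hm : 1 ≤ m) (x : Fin d → ℝ) (a b : ℝ)
    (hab : a < b)
    (ha : m ≤ (Finset.univ.filter fun i => x i ≤ a).card)
    (hb : m ≤ (Finset.univ.filter fun i => b ≤ x i).card) :
    (m : ℝ) / 2 * (b - a) ^ 2 ≤ ∑ i, (x i - (∑ j, x j) / d) ^ 2 := by
  set μ : ℝ := (∑ j, x j) / d with hμ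
  set A := Finset.univ.filter fun i => x i ≤ a with hA
  set B := Finset.univ.filter fun i => b ≤ x i with hB
  have hdisj : Disjoint A B := by
    rw [Finset.disjoint_left]
    intro i hiA hiB
    simp only [hA, hB, Finset.mem_filter] at hiA hiB
    linarith [hiA.2, hiB.2]
  set p : ℝ := max (μ - a) 0 with hp
  set q : ℝ := max (b - μ) 0 with hq
  have hp0 : 0 ≤ p := le_max_right _ _
  have hq0 : 0 ≤ q := le_max_right _ _
  have hpq : b - a ≤ p + q := by
    rcases le_total μ a with h | h
    · have : b - μ ≤ q := le_max_left _ _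
      linarith
    · have h1 : μ - a ≤ p := le_max_left _ _
      rcases le_total μ b with h2 | h2
      · have : b - μ ≤ q := le_max_left _ _
        linarith
      · linarith
  have hAsum : (A.card : ℝ) * p ^ 2 ≤ ∑ i ∈ A, (x i - μ) ^ 2 := by
    have := Finset.card_nsmul_le_sum A (fun i => (x i - μ)^2) (p^2) ?_
    · simpa [nsmul_eq_mul] using this
    intro i hi
    simp only [hA, Finset.mem_filter] at hi
    show p ^ 2 ≤ (x i - μ) ^ 2
    rcases le_total (μ - a) 0 with h | h
    · rw [hp, max_eq_right h]
      simpa using sq_nonneg (x i - μ)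
    · rw [hp, max_eq_left h]
      have h2 : μ - a ≤ μ - x i := by linarith [hi.2]
      nlinarith
  have hBsum : (B.card : ℝ) * q ^ 2 ≤ ∑ i ∈ B, (x i - μ) ^ 2 := by
    have := Finset.card_nsmul_le_sum B (fun i => (x i - μ)^2) (q^2) ?_
    · simpa [nsmul_eq_mul] using this
    intro i hi
    simp only [hB, Finset.mem_filter] at hi
    show q ^ 2 ≤ (x i - μ) ^ 2
    rcases le_total (b - μ) 0 with h | h
    · rw [hq, max_eq_right h]
      simpa using sq_nonneg (x i - μ)
    · rw [hq, max_eq_left h]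
      have h2 : b - μ ≤ x i - μ := by linarith [hi.2]
      nlinarith
  have hsub : ∑ i ∈ A ∪ B, (x i - μ) ^ 2 ≤ ∑ i, (x i - μ) ^ 2 := by
    apply Finset.sum_le_sum_of_subset_of_nonneg (Finset.subset_univ _)
    intro i _ _; positivity
  rw [Finset.sum_union hdisj] at hsub
  have hm' : (m : ℝ) * p ^ 2 ≤ (A.card : ℝ) * p ^ 2 := by
    apply mul_le_mul_of_nonneg_right _ (by positivity)
    exact_mod_cast ha
  have hm'' : (m : ℝ) * q ^ 2 ≤ (B.card : ℝ) * q ^ 2 := by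
    apply mul_le_mul_of_nonneg_right _ (by positivity)
    exact_mod_cast hb
  have hmpos : (1:ℝ) ≤ (m:ℝ) := by exact_mod_cast hm
  have hkey : (b - a) ^ 2 ≤ 2 * (p ^ 2 + q ^ 2) := by
    nlinarith [sq_nonneg (p - q)]
  have := mul_le_mul_of_nonneg_left hkey (by positivity : (0:ℝ) ≤ (m:ℝ) / 2)
  nlinarith
end

section
/- Let V be a finite-dimensional complex vector space, N ≥ 1, and let W_1, …, W_N and W'_1, …, W'_N be subspaces giving two internal direct sum decompositions V = W_1 ⊕ … ⊕ W_N = W'_1 ⊕ … ⊕ W'_N such that for every i, W_1 ⊕ … ⊕ W_i = W'_1 ⊕ … ⊕ W'_i. For t ∈ ℂ*, let λ(t) ∈ GL(V) act as multiplication by t^i on W_i, and λ'(t) ∈ GL(V) act as multiplication by t^i on W'_i. Then for any i and any v ∈ W_i, writing v = w_1 + … + w_N with w_j ∈ W'_j, one has w_j = 0 for j > i, λ'(t)^{−1} λ(t) v = ∑_{j ≤ i} t^{i−j} w_j for all t ∈ ℂ*, and consequently λ'(t)^{−1} λ(t) v → w_i as t → 0. -/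
open Filter

/-- Two one-parameter subgroups `λ, λ'` of `GL(V)` acting with weight `i` on the
pieces `Wᵢ` resp. `W'ᵢ` of two direct sum decompositions with the same flag:
for `v ∈ Wᵢ` with `W'`-decomposition `v = ∑ⱼ wⱼ`, one has `wⱼ = 0` for `j > i`,
`λ'(t)⁻¹ λ(t) v = ∑_{j ≤ i} t^{i−j} wⱼ`, and `λ'(t)⁻¹ λ(t) v → wᵢ` as `t → 0`.
Here the pieces are indexed by `Fin N`, the piece of index `j` having weight
`j + 1 ∈ {1, …, N}`. -/
theorem stmt_7 (V : Type*) [NormedAddCommGroup V] [NormedSpace ℂ V]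
    [FiniteDimensional ℂ V]
    (N : ℕ) (hN : 1 ≤ N) (W W' : Fin N → Submodule ℂ V)
    (hW : DirectSum.IsInternal W) (hW' : DirectSum.IsInternal W')
    (hflag : ∀ i : Fin N, (⨆ j ≤ i, W j) = ⨆ j ≤ i, W' j)
    (Λ Λ' : ℂ → (V ≃ₗ[ℂ] V))
    (hΛ : ∀ t : ℂ, t ≠ 0 → ∀ j : Fin N, ∀ u ∈ W j, Λ t u = t ^ ((j : ℕ) + 1) • u)
    (hΛ' : ∀ t : ℂ, t ≠ 0 → ∀ j : Fin N, ∀ u ∈ W' j, Λ' t u = t ^ ((j : ℕ) + 1) • u)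
    (i : Fin N) (v : V) (hv : v ∈ W i)
    (w : Fin N → V) (hw : ∀ j, w j ∈ W' j) (hsum : v = ∑ j, w j) :
    (∀ j, i < j → w j = 0) ∧
    (∀ t : ℂ, t ≠ 0 →
      (Λ' t).symm (Λ t v)
        = ∑ j ∈ Finset.univ.filter (fun j : Fin N => j ≤ i),
            t ^ ((i : ℕ) - (j : ℕ)) • w j) ∧
    Tendsto (fun t : ℂ => (Λ' t).symm (Λ t v)) (nhdsWithin 0 {(0 : ℂ)}ᶜ)
      (nhds (w i)) := by
  -- v lies in the flag piece ⨆ j ≤ i, W' j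
  have hvW' : v ∈ ⨆ j ≤ i, W' j := by
    rw [← hflag i]
    exact (le_iSup₂ (f := fun j (_ : j ≤ i) => W j) i le_rfl) hv
  -- Part 1
  have h1 : ∀ j, i < j → w j = 0 := by
    intro j hij
    have hindep := hW'.submodule_iSupIndep j
    have hv' : v ∈ ⨆ k ≠ j, W' k := by
      have hle : (⨆ k ≤ i, W' k) ≤ ⨆ k ≠ j, W' k := by
        refine iSup₂_le fun k hk => le_iSup₂ (f := fun k (_ : k ≠ j) => W' k) k ?_
        exact fun h => absurd (h ▸ hk) (not_le.mpr hij)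
      exact hle hvW'
    have hrest : (∑ k ∈ Finset.univ.erase j, w k) ∈ ⨆ k ≠ j, W' k := by
      refine Submodule.sum_mem _ fun k hk => ?_
      have hkj : k ≠ j := Finset.ne_of_mem_erase hk
      exact (le_iSup₂ (f := fun k (_ : k ≠ j) => W' k) k hkj) (hw k)
    have hwj : w j = v - ∑ k ∈ Finset.univ.erase j, w k := by
      rw [hsum, ← Finset.add_sum_erase _ _ (Finset.mem_univ j)]
      abel
    have : w j ∈ W' j ⊓ ⨆ k ≠ j, W' k :=
      ⟨hw j, hwj ▸ Submodule.sub_mem _ hv' hrest⟩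
    simpa using hindep.le_bot this
  -- Part 2
  have h2 : ∀ t : ℂ, t ≠ 0 →
      (Λ' t).symm (Λ t v)
        = ∑ j ∈ Finset.univ.filter (fun j : Fin N => j ≤ i),
            t ^ ((i : ℕ) - (j : ℕ)) • w j := by
    intro t ht
    have hsymm : ∀ j : Fin N, (Λ' t).symm (w j) = (t ^ ((j : ℕ) + 1))⁻¹ • w j := by
      intro j
      rw [LinearEquiv.symm_apply_eq, map_smul, hΛ' t ht j (w j) (hw j), smul_smul,
        inv_mul_cancel₀ (pow_ne_zero _ ht), one_smul]
    have key : (Λ' t).symm (Λ t v)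
        = ∑ j : Fin N, (t ^ ((i : ℕ) + 1) * (t ^ ((j : ℕ) + 1))⁻¹) • w j := by
      rw [hΛ t ht i v hv, map_smul, hsum, map_sum]
      simp_rw [hsymm, Finset.smul_sum, smul_smul]
    rw [key, ← Finset.sum_filter_add_sum_filter_not Finset.univ (fun j : Fin N => j ≤ i)]
    have hz : ∑ j ∈ Finset.univ.filter (fun j : Fin N => ¬ j ≤ i),
        (t ^ ((i : ℕ) + 1) * (t ^ ((j : ℕ) + 1))⁻¹) • w j = 0 := by
      refine Finset.sum_eq_zero fun j hj => ?_
      rw [h1 j (not_le.mp (Finset.mem_filter.mp hj).2), smul_zero]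
    rw [hz, add_zero]
    refine Finset.sum_congr rfl fun j hj => ?_
    have hji : (j : ℕ) ≤ (i : ℕ) := (Finset.mem_filter.mp hj).2
    congr 1
    have : (i : ℕ) + 1 = ((i : ℕ) - (j : ℕ)) + ((j : ℕ) + 1) := by omega
    rw [this, pow_add, mul_assoc, mul_inv_cancel₀ (pow_ne_zero _ ht), mul_one]
  refine ⟨h1, h2, ?_⟩
  -- Part 3
  have hg0 : (∑ j ∈ Finset.univ.filter (fun j : Fin N => j ≤ i),
      (0 : ℂ) ^ ((i : ℕ) - (j : ℕ)) • w j) = w i := by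
    rw [Finset.sum_eq_single i]
    · simp
    · intro j hj hji
      have hle : (j : ℕ) ≤ (i : ℕ) := (Finset.mem_filter.mp hj).2
      have hlt : (j : ℕ) < (i : ℕ) := lt_of_le_of_ne hle (fun h => hji (Fin.ext h))
      rw [zero_pow (by omega), zero_smul]
    · intro h
      simp at h
  have hcont : Continuous (fun t : ℂ => ∑ j ∈ Finset.univ.filter (fun j : Fin N => j ≤ i),
      t ^ ((i : ℕ) - (j : ℕ)) • w j) := by
    refine continuous_finset_sum _ fun j _ => ?_
    exact (continuous_pow _).smul continuous_const
  have htend : Tendsto (fun t : ℂ => ∑ j ∈ Finset.univ.filter (fun j : Fin N => j ≤ i),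
      t ^ ((i : ℕ) - (j : ℕ)) • w j) (nhdsWithin 0 {(0 : ℂ)}ᶜ) (nhds (w i)) := by
    have := (hcont.tendsto 0).mono_left (nhdsWithin_le_nhds (s := {(0 : ℂ)}ᶜ))
    simpa [hg0] using this
  refine htend.congr' ?_
  filter_upwards [eventually_mem_nhdsWithin] with t ht
  exact (h2 t ht).symm
end

section
/- Let V be a finite-dimensional complex vector space, N ≥ 1, and let W_1, …, W_N and W'_1, …, W'_N be subspaces giving two internal direct sum decompositions V = W_1 ⊕ … ⊕ W_N = W'_1 ⊕ … ⊕ W'_N such that for every i, W_1 ⊕ … ⊕ W_i = W'_1 ⊕ … ⊕ W'_i. Let π_i : V → V be the projection onto W_i along the remaining summands W_j (j ≠ i), and π'_i : V → V the projection onto W'_i along the W'_j (j ≠ i). Then the linear map M_0 = ∑_{i=1}^N π'_i ∘ π_i : V → V is a linear automorphism of V. -/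
/-- Given two direct sum decompositions `V = W₁ ⊕ … ⊕ W_N = W'₁ ⊕ … ⊕ W'_N` with the
same flag, and the associated projections `πᵢ` onto `Wᵢ` and `π'ᵢ` onto `W'ᵢ`, the
map `M₀ = ∑ᵢ π'ᵢ ∘ πᵢ` is a linear automorphism of `V`. -/
theorem stmt_8 (V : Type*) [AddCommGroup V] [Module ℂ V] [FiniteDimensional ℂ V]
    (N : ℕ) (hN : 1 ≤ N) (W W' : Fin N → Submodule ℂ V)
    (hW : DirectSum.IsInternal W) (hW' : DirectSum.IsInternal W')
    (hflag : ∀ i : Fin N, (⨆ j ≤ i, W j) = ⨆ j ≤ i, W' j)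
    (π π' : Fin N → (V →ₗ[ℂ] V))
    (hπ : ∀ v : V, (∀ i, π i v ∈ W i) ∧ ∑ i, π i v = v)
    (hπ' : ∀ v : V, (∀ i, π' i v ∈ W' i) ∧ ∑ i, π' i v = v) :
    Function.Bijective (∑ i, (π' i) ∘ₗ (π i) : V →ₗ[ℂ] V) := by
  set M := (∑ i, (π' i) ∘ₗ (π i) : V →ₗ[ℂ] V) with hM
  have hMapp : ∀ v : V, M v = ∑ i, π' i (π i v) := by
    intro v
    rw [hM]
    simp [LinearMap.sum_apply]
  -- a projection kills anything in the span of the other summands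
  have key : ∀ (U : Fin N → Submodule ℂ V), DirectSum.IsInternal U →
      ∀ (p : Fin N → (V →ₗ[ℂ] V)),
      (∀ v : V, (∀ i, p i v ∈ U i) ∧ ∑ i, p i v = v) →
      ∀ (k : Fin N) (v : V), v ∈ (⨆ j, ⨆ _ : j ≠ k, U j) → p k v = 0 := by
    intro U hU p hp k v hv
    have h1 : p k v ∈ U k := (hp v).1 k
    have heq : p k v = v - ∑ j ∈ Finset.univ.erase k, p j v := by
      have h := (hp v).2
      rw [← Finset.add_sum_erase _ _ (Finset.mem_univ k)] at h
      exact eq_sub_of_add_eq h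
    have h2 : p k v ∈ (⨆ j, ⨆ _ : j ≠ k, U j) := by
      rw [heq]
      refine sub_mem hv (Submodule.sum_mem _ fun j hj => ?_)
      exact le_iSup₂ (f := fun j (_ : j ≠ k) => U j) j (Finset.ne_of_mem_erase hj)
        ((hp v).1 j)
    have := (hU.submodule_iSupIndep k).le_bot (Submodule.mem_inf.mpr ⟨h1, h2⟩)
    simpa using this
  -- the two flags agree at every level
  have Fn_eq : ∀ m : ℕ, (⨆ j : Fin N, ⨆ _ : (j : ℕ) < m, W j)
      = ⨆ j : Fin N, ⨆ _ : (j : ℕ) < m, W' j := by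
    intro m
    match m with
    | 0 => simp
    | m + 1 =>
      by_cases hm : m < N
      · have e : ∀ j : Fin N, ((j : ℕ) < m + 1) = (j ≤ ⟨m, hm⟩) := by
          intro j
          exact propext (by simp [Fin.le_def, Nat.lt_succ_iff])
        have h1 : (⨆ j : Fin N, ⨆ _ : (j : ℕ) < m + 1, W j)
            = ⨆ j ≤ (⟨m, hm⟩ : Fin N), W j := iSup_congr fun j => by rw [e j]
        have h2 : (⨆ j : Fin N, ⨆ _ : (j : ℕ) < m + 1, W' j)
            = ⨆ j ≤ (⟨m, hm⟩ : Fin N), W' j := iSup_congr fun j => by rw [e j]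
        rw [h1, h2, hflag]
      · have e : ∀ j : Fin N, (j : ℕ) < m + 1 := fun j => by
          have := j.is_lt; omega
        have h1 : (⨆ j : Fin N, ⨆ _ : (j : ℕ) < m + 1, W j) = ⨆ j, W j :=
          iSup_congr fun j => by simp [e j]
        have h2 : (⨆ j : Fin N, ⨆ _ : (j : ℕ) < m + 1, W' j) = ⨆ j, W' j :=
          iSup_congr fun j => by simp [e j]
        rw [h1, h2, hW.submodule_iSup_eq_top, hW'.submodule_iSup_eq_top]
  -- main induction: the kernel of M meets each step of the flag trivially
  have main : ∀ n : ℕ, ∀ v : V,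
      v ∈ (⨆ j : Fin N, ⨆ _ : (j : ℕ) < n, W j) → M v = 0 → v = 0 := by
    intro n
    induction n with
    | zero => intro v hv _; simpa using hv
    | succ m ih =>
      intro v hv hMv
      -- π j v = 0 for j > m
      have hπj0 : ∀ j : Fin N, m < (j : ℕ) → π j v = 0 := by
        intro j hj
        have hle : (⨆ l : Fin N, ⨆ _ : (l : ℕ) < m + 1, W l) ≤ ⨆ l, ⨆ _ : l ≠ j, W l := by
          refine iSup₂_le fun l hl => ?_
          refine le_iSup₂ (f := fun l (_ : l ≠ j) => W l) l ?_
          intro hlj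
          exact absurd (congrArg Fin.val hlj) (by omega)
        exact key W hW π hπ j v (hle hv)
      -- π' k (π j v) = 0 whenever j < k
      have hπ'0 : ∀ j k : Fin N, j < k → π' k (π j v) = 0 := by
        intro j k hjk
        refine key W' hW' π' hπ' k (π j v) ?_
        have hmem : π j v ∈ (⨆ l ≤ j, W l) :=
          le_iSup₂ (f := fun l (_ : l ≤ j) => W l) j le_rfl ((hπ v).1 j)
        rw [hflag j] at hmem
        have hle : (⨆ l ≤ j, W' l) ≤ ⨆ l, ⨆ _ : l ≠ k, W' l :=
          iSup₂_le fun l hl =>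
            le_iSup₂ (f := fun l (_ : l ≠ k) => W' l) l (ne_of_lt (lt_of_le_of_lt hl hjk))
        exact hle hmem
      -- express v as a sum of cross terms
      have hv2 : v = ∑ j, ∑ k ∈ Finset.univ.erase j, π' k (π j v) := by
        have h1 : v = ∑ j, π j v := ((hπ v).2).symm
        have h2 : ∀ j : Fin N, π j v = ∑ k, π' k (π j v) :=
          fun j => ((hπ' (π j v)).2).symm
        calc v = ∑ j, ∑ k, π' k (π j v) := by
              conv_lhs => rw [h1]
              exact Finset.sum_congr rfl fun j _ => h2 j
          _ = ∑ j, (π' j (π j v) + ∑ k ∈ Finset.univ.erase j, π' k (π j v)) :=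
              Finset.sum_congr rfl fun j _ =>
                (Finset.add_sum_erase _ _ (Finset.mem_univ j)).symm
          _ = M v + ∑ j, ∑ k ∈ Finset.univ.erase j, π' k (π j v) := by
              rw [Finset.sum_add_distrib, hMapp]
          _ = ∑ j, ∑ k ∈ Finset.univ.erase j, π' k (π j v) := by rw [hMv, zero_add]
      -- hence v lies one step lower in the flag
      have hvm : v ∈ (⨆ j : Fin N, ⨆ _ : (j : ℕ) < m, W j) := by
        rw [hv2, Fn_eq m]
        refine Submodule.sum_mem _ fun j _ => Submodule.sum_mem _ fun k hk => ?_
        rcases lt_or_ge m (j : ℕ) with hj | hj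
        · rw [hπj0 j hj]; simp
        rcases lt_or_ge j k with hjk | hkj
        · rw [hπ'0 j k hjk]; simp
        have hkj' : k < j := lt_of_le_of_ne hkj (Finset.ne_of_mem_erase hk)
        have hk' : (k : ℕ) < m := lt_of_lt_of_le hkj' hj
        exact le_iSup₂ (f := fun (l : Fin N) (_ : (l : ℕ) < m) => W' l) k hk'
          ((hπ' (π j v)).1 k)
      exact ih v hvm hMv
  have hinj : Function.Injective M := by
    refine (injective_iff_map_eq_zero M).mpr fun v hv => ?_
    refine main N v ?_ hv
    have htop : v ∈ (⊤ : Submodule ℂ V) := trivial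
    rw [← hW.submodule_iSup_eq_top] at htop
    have hle : (⨆ j, W j) ≤ ⨆ j : Fin N, ⨆ _ : (j : ℕ) < N, W j :=
      iSup_le fun j => le_iSup₂ (f := fun (l : Fin N) (_ : (l : ℕ) < N) => W l) j j.is_lt
    exact hle htop
  exact ⟨hinj, (LinearMap.injective_iff_surjective).mp hinj⟩
end
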